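/- Let Q be a CQ and L a partial lexicographic order (a sequence of some free variables). If Q is free-connex, L-connex, and has no disruptive trio with respect to L, then there exists an ordering L+ of all free variables of Q that begins with L such that Q has no disruptive trio with respect to L+. -/

import Mathlib

/-- Two vertices are neighbors in a hypergraph if some hyperedge contains both. -/
def Nbr {V : Type*} (E : Finset (Finset V)) (x y : V) : Prop :=
  ∃ e ∈ E, x ∈ e ∧ y ∈ e

/-- A disruptive trio w.r.t. a neighborhood relation `nbr` and an order `L`. -/
def DTrio {V : Type*} [DecidableEq V] (nbr : V → V → Prop) (L : List V) : Prop :=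
  ∃ a b c, a ∈ L ∧ b ∈ L ∧ c ∈ L ∧ a ≠ b ∧ ¬ nbr a b ∧ nbr a c ∧ nbr b c ∧
    L.idxOf a < L.idxOf c ∧ L.idxOf b < L.idxOf c

/-- A hypergraph `E` is `S`-connex: there is a join tree of an inclusive
extension of `E` with a connected subtree whose labels cover exactly `S`. -/
def SConnex {V : Type*} (E : Finset (Finset V)) (S : Finset V) : Prop :=
  ∃ (ι : Type) (T : SimpleGraph ι) (lab : ι → Finset V),
    T.IsTree ∧ (∀ e ∈ E, ∃ i, lab i = e) ∧ (∀ i, ∃ e ∈ E, lab i ⊆ e) ∧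
    (∀ v : V, (T.induce {i | v ∈ lab i}).Preconnected) ∧
    ∃ Sub : Set ι, (T.induce Sub).Preconnected ∧
      ∀ v : V, v ∈ S ↔ ∃ i ∈ Sub, v ∈ lab i

namespace PocAux

open SimpleGraph

variable {ι : Type} (T : SimpleGraph ι)

/-- A set of tree nodes is walk-connected within itself. -/
def ConnSet (s : Set ι) : Prop :=
  ∀ x ∈ s, ∀ y ∈ s, ∃ w : T.Walk x y, ∀ z ∈ w.support, z ∈ s

lemma connSet_of_preconnected (s : Set ι) (h : (T.induce s).Preconnected) :
    ConnSet T s := by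
  intro x hx y hy
  obtain ⟨w⟩ := h ⟨x, hx⟩ ⟨y, hy⟩
  refine ⟨w.map (SimpleGraph.Embedding.induce s).toHom, ?_⟩
  intro z hz
  have hz2 : z ∈ (w.map (SimpleGraph.Embedding.induce s).toHom).support := hz
  rw [SimpleGraph.Walk.support_map, List.mem_map] at hz2
  obtain ⟨⟨z', hz'⟩, _, rfl⟩ := hz2
  exact hz'

lemma isPath_concat {u v w : ι} {p : T.Walk u v} (h : T.Adj v w) (hp : p.IsPath)
    (hw : w ∉ p.support) : (p.concat h).IsPath := by
  have h2 := ((hp.reverse).cons (h := h.symm) (by simpa using hw)).reverse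
  simpa [SimpleGraph.Walk.concat_eq_append] using h2

/-- On a walk from outside `C` into `C`, there is a boundary vertex. -/
lemma boundary {C : Set ι} :
    ∀ {u v : ι} (w : T.Walk u v), u ∉ C → v ∈ C →
      ∃ (k j : ι) (w1 : T.Walk u k), T.Adj k j ∧ j ∈ C ∧
        (∀ z ∈ w1.support, z ∉ C ∧ z ∈ w.support) := by
  intro u v w
  induction w with
  | nil => intro hu hv; exact absurd hv hu
  | @cons a d v h w' ih =>
    intro hu hv
    by_cases hd : d ∈ C
    · refine ⟨a, d, SimpleGraph.Walk.nil, h, hd, ?_⟩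
      intro z hz
      simp only [SimpleGraph.Walk.support_nil, List.mem_singleton] at hz
      subst hz
      exact ⟨hu, SimpleGraph.Walk.start_mem_support _⟩
    · obtain ⟨k, j, w1, hkj, hj, hw1⟩ := ih hd hv
      refine ⟨k, j, SimpleGraph.Walk.cons h w1, hkj, hj, ?_⟩
      intro z hz
      rw [SimpleGraph.Walk.support_cons, List.mem_cons] at hz
      rcases hz with rfl | hz
      · exact ⟨hu, SimpleGraph.Walk.start_mem_support _⟩
      · obtain ⟨h1, h2⟩ := hw1 z hz
        exact ⟨h1, by rw [SimpleGraph.Walk.support_cons]; exact List.mem_cons_of_mem _ h2⟩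

/-- Uniqueness of the boundary node: if `t` and `k` are outside the connected set `C`,
both adjacent to `C`, and joined by a walk avoiding `C`, then `t = k`. -/
lemma claimB (hT : T.IsTree) {C : Set ι} (hC : ConnSet T C) {t k c0 j : ι}
    (ht : t ∉ C) (htc : T.Adj t c0) (hc0 : c0 ∈ C) (hk : k ∉ C) (hkj : T.Adj k j)
    (hj : j ∈ C) (w : T.Walk t k) (hw : ∀ z ∈ w.support, z ∉ C) : t = k := by
  classical
  by_contra hne
  obtain ⟨q0, hq0⟩ := hC c0 hc0 j hj
  set p := w.bypass with hpdef
  have hpC : ∀ z ∈ p.support, z ∉ C := fun z hz => hw z (w.support_bypass_subset hz)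
  set pc := q0.bypass with hpcdef
  have hpcC : ∀ z ∈ pc.support, z ∈ C := fun z hz => hq0 z (q0.support_bypass_subset hz)
  have hkpc : k ∉ pc.support := fun h => hk (hpcC _ h)
  have hq1 : (pc.concat hkj.symm).IsPath := isPath_concat T hkj.symm q0.bypass_isPath hkpc
  have hsupconcat : (pc.concat hkj.symm).support = pc.support ++ [k] := by
    simp [SimpleGraph.Walk.support_concat, List.concat_eq_append]
  have hq : (SimpleGraph.Walk.cons htc (pc.concat hkj.symm)).IsPath := by
    refine hq1.cons ?_
    rw [hsupconcat, List.mem_append, List.mem_singleton]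
    rintro (h | rfl)
    · exact ht (hpcC _ h)
    · exact hne rfl
  have hpq := hT.2.path_unique ⟨p, w.bypass_isPath⟩ ⟨_, hq⟩
  have hc0p : c0 ∈ p.support := by
    have : c0 ∈ (SimpleGraph.Walk.cons htc (pc.concat hkj.symm)).support := by
      rw [SimpleGraph.Walk.support_cons, List.mem_cons, hsupconcat]
      exact Or.inr (List.mem_append_left _ pc.start_mem_support)
    have hps : p = SimpleGraph.Walk.cons htc (pc.concat hkj.symm) := congrArg Subtype.val hpq
    rw [hps]; exact this
  exact hpC c0 hc0p hc0

/-- If connected sets `A` meets both `C` and `D`, where `D` avoids `C`, and `t ∈ D`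
is adjacent to `C`, then `t ∈ A`. -/
lemma claimA (hT : T.IsTree) {C D A : Set ι} (hC : ConnSet T C) (hD : ConnSet T D)
    (hA : ConnSet T A) (hDC : ∀ i ∈ D, i ∉ C) {t c0 : ι} (ht : t ∈ D)
    (htc : T.Adj t c0) (hc0 : c0 ∈ C) {x y : ι} (hxA : x ∈ A) (hxC : x ∈ C)
    (hyA : y ∈ A) (hyD : y ∈ D) : t ∈ A := by
  classical
  obtain ⟨wA, hwA⟩ := hA y hyA x hxA
  obtain ⟨k, j, w1, hkj, hj, hw1⟩ := boundary T wA (hDC y hyD) hxC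
  obtain ⟨wD, hwD⟩ := hD t ht y hyD
  have hkA : k ∈ A := hwA k (hw1 k (SimpleGraph.Walk.end_mem_support w1)).2
  have htk : t = k := by
    refine claimB T hT hC (hDC t ht) htc hc0
      (hw1 k (SimpleGraph.Walk.end_mem_support w1)).1 hkj hj (wD.append w1) ?_
    intro z hz
    rw [SimpleGraph.Walk.support_append, List.mem_append] at hz
    rcases hz with hz | hz
    · exact hDC z (hwD z hz)
    · exact (hw1 z (List.mem_of_mem_tail hz)).1
  rw [htk]; exact hkA

variable {V : Type*} [DecidableEq V]

/-- The invariant maintained while growing the connected node set `C`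
and the corresponding order `cur`. -/
structure Good (E : Finset (Finset V)) (free : Finset V) (T : SimpleGraph ι)
    (lab : ι → Finset V) (C : Set ι) (cur : List V) : Prop where
  conn : ConnSet T C
  nodup : cur.Nodup
  mem_free : ∀ v ∈ cur, v ∈ free
  inv : ∀ v ∈ free, (v ∈ cur ↔ ∃ i ∈ C, v ∈ lab i)
  trio : ¬ DTrio (Nbr E) cur

variable {E : Finset (Finset V)} {free : Finset V} {T} {lab : ι → Finset V}

lemma step (hT : T.IsTree) (hedges : ∀ e ∈ E, ∃ i, lab i = e)
    (hsub : ∀ i, ∃ e ∈ E, lab i ⊆ e)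
    (hvert : ∀ v : V, ConnSet T {i | v ∈ lab i})
    {C : Set ι} {cur : List V} (hS : Good E free T lab C cur)
    {t : ι} (ht : t ∉ C) (hadj : ∃ c0 ∈ C, T.Adj t c0) :
    ∃ newvs : List V, Good E free T lab (C ∪ {t}) (cur ++ newvs) ∧
      ∀ v, v ∈ newvs ↔ (v ∈ lab t ∧ v ∈ free ∧ v ∉ cur) := by
  classical
  set newvs : List V := (lab t).toList.filter (fun v => decide (v ∈ free ∧ v ∉ cur))
    with hnewdef
  have hmem : ∀ v, v ∈ newvs ↔ (v ∈ lab t ∧ v ∈ free ∧ v ∉ cur) := by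
    intro v
    simp [hnewdef, List.mem_filter, Finset.mem_toList]
  -- walk from t into C
  have hwalk_t : ∀ c ∈ C, ∃ w : T.Walk t c, ∀ z ∈ w.support, z ∈ C ∪ {t} := by
    intro c hc
    obtain ⟨c0, hc0, hadj0⟩ := hadj
    obtain ⟨w0, hw0⟩ := hS.conn c0 hc0 c hc
    refine ⟨SimpleGraph.Walk.cons hadj0 w0, ?_⟩
    intro z hz
    rw [SimpleGraph.Walk.support_cons, List.mem_cons] at hz
    rcases hz with rfl | hz
    · exact Or.inr rfl
    · exact Or.inl (hw0 z hz)
  refine ⟨newvs, ⟨?_, ?_, ?_, ?_, ?_⟩, hmem⟩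
  · -- connectivity of C ∪ {t}
    intro x hx y hy
    rcases hx with hx | hx
    · rcases hy with hy | hy
      · obtain ⟨w, hw⟩ := hS.conn x hx y hy
        exact ⟨w, fun z hz => Or.inl (hw z hz)⟩
      · rcases hy with rfl
        obtain ⟨w, hw⟩ := hwalk_t x hx
        exact ⟨w.reverse, fun z hz => hw z (by rwa [SimpleGraph.Walk.support_reverse,
          List.mem_reverse] at hz)⟩
    · rcases hx with rfl
      rcases hy with hy | hy
      · exact hwalk_t y hy
      · rcases hy with rfl
        exact ⟨SimpleGraph.Walk.nil, by simp⟩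
  · -- nodup
    refine hS.nodup.append ((Finset.nodup_toList _).filter _) ?_
    intro a ha hanew
    exact ((hmem a).mp hanew).2.2 ha
  · -- all in free
    intro v hv
    rcases List.mem_append.mp hv with hv | hv
    · exact hS.mem_free v hv
    · exact ((hmem v).mp hv).2.1
  · -- invariant
    intro v hvf
    constructor
    · intro hv
      rcases List.mem_append.mp hv with hv | hv
      · obtain ⟨i, hi, hvi⟩ := (hS.inv v hvf).mp hv
        exact ⟨i, Or.inl hi, hvi⟩
      · exact ⟨t, Or.inr rfl, ((hmem v).mp hv).1⟩
    · rintro ⟨i, hi | rfl, hvi⟩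
      · exact List.mem_append_left _ ((hS.inv v hvf).mpr ⟨i, hi, hvi⟩)
      · by_cases hvcur : v ∈ cur
        · exact List.mem_append_left _ hvcur
        · exact List.mem_append_right _ ((hmem v).mpr ⟨hvi, hvf, hvcur⟩)
  · -- no disruptive trio
    intro hD
    obtain ⟨a, b, c, ha, hb, hc, hab, hnab, hac, hbc, hia, hib⟩ := hD
    by_cases hccur : c ∈ cur
    · -- everything is in `cur`
      have hidxc : (cur ++ newvs).idxOf c = cur.idxOf c :=
        List.idxOf_append_of_mem hccur
      have hmemcur : ∀ x : V, x ∈ cur ++ newvs →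
          (cur ++ newvs).idxOf x < (cur ++ newvs).idxOf c → x ∈ cur := by
        intro x hx hlt
        by_contra hxc
        rw [List.idxOf_append_of_notMem hxc, hidxc] at hlt
        have := List.idxOf_lt_length_iff.mpr hccur
        omega
      have hacur := hmemcur a ha hia
      have hbcur := hmemcur b hb hib
      refine hS.trio ⟨a, b, c, hacur, hbcur, hccur, hab, hnab, hac, hbc, ?_, ?_⟩
      · rw [← List.idxOf_append_of_mem (l₂ := newvs) hacur, ← hidxc]; exact hia
      · rw [← List.idxOf_append_of_mem (l₂ := newvs) hbcur, ← hidxc]; exact hib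
    · -- c is new
      have hcnew : c ∈ newvs := (List.mem_append.mp hc).resolve_left hccur
      obtain ⟨hclab, hcfree, -⟩ := (hmem c).mp hcnew
      have hTcC : ∀ i ∈ {i : ι | c ∈ lab i}, i ∉ C := by
        intro i hi hiC
        exact hccur ((hS.inv c hcfree).mpr ⟨i, hiC, hi⟩)
      have key : ∀ x : V, x ∈ cur ++ newvs → Nbr E x c → x ∈ lab t := by
        intro x hx hnx
        rcases List.mem_append.mp hx with hxcur | hxnew
        · have hxfree := hS.mem_free x hxcur
          obtain ⟨i, hiC, hxi⟩ := (hS.inv x hxfree).mp hxcur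
          obtain ⟨e, he, hxe, hce⟩ := hnx
          obtain ⟨ie, hie⟩ := hedges e he
          obtain ⟨c0, hc0, hadj0⟩ := hadj
          exact claimA T hT hS.conn (hvert c) (hvert x) hTcC hclab hadj0 hc0
            (x := i) (y := ie) hxi hiC (by rw [Set.mem_setOf_eq, hie]; exact hxe)
            (by rw [Set.mem_setOf_eq, hie]; exact hce)
        · exact ((hmem x).mp hxnew).1
      obtain ⟨e, he, hsube⟩ := hsub t
      exact hnab ⟨e, he, hsube (key a ha hac), hsube (key b hb hbc)⟩

lemma inner (hT : T.IsTree) (hedges : ∀ e ∈ E, ∃ i, lab i = e)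
    (hsub : ∀ i, ∃ e ∈ E, lab i ⊆ e)
    (hvert : ∀ v : V, ConnSet T {i | v ∈ lab i})
    {v0 : V} (hv0f : v0 ∈ free) :
    ∀ {c i0 : ι} (w : T.Walk c i0), v0 ∈ lab i0 → ∀ (C : Set ι) (cur : List V),
      Good E free T lab C cur → c ∈ C →
      ∃ (C' : Set ι) (cur' : List V), Good E free T lab C' cur' ∧
        cur <+: cur' ∧ v0 ∈ cur' := by
  intro c i0 w
  induction w with
  | nil =>
    intro hi0 C cur hS hc
    exact ⟨C, cur, hS, List.prefix_rfl, (hS.inv v0 hv0f).mpr ⟨_, hc, hi0⟩⟩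
  | @cons a d _ h w' ih =>
    intro hi0 C cur hS hc
    by_cases hd : d ∈ C
    · exact ih hi0 C cur hS hd
    · obtain ⟨newvs, hS', -⟩ := step hT hedges hsub hvert hS hd ⟨a, hc, h.symm⟩
      obtain ⟨C', cur', hS'', hpre, hv0⟩ :=
        ih hi0 (C ∪ {d}) (cur ++ newvs) hS' (Or.inr rfl)
      exact ⟨C', cur', hS'', (cur.prefix_append newvs).trans hpre, hv0⟩

lemma card_lt {cur cur' : List V} {v0 : V} (hpre : cur <+: cur') (hv0f : v0 ∈ free)
    (hv0 : v0 ∉ cur) (hv0' : v0 ∈ cur') :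
    (free \ cur'.toFinset).card < (free \ cur.toFinset).card := by
  apply Finset.card_lt_card
  have hsub : free \ cur'.toFinset ⊆ free \ cur.toFinset := by
    apply Finset.sdiff_subset_sdiff (le_refl _)
    intro x hx
    exact List.mem_toFinset.mpr (hpre.subset (List.mem_toFinset.mp hx))
  rw [Finset.ssubset_iff_of_subset hsub]
  exact ⟨v0, Finset.mem_sdiff.mpr ⟨hv0f, fun h => hv0 (List.mem_toFinset.mp h)⟩,
    fun h => (Finset.mem_sdiff.mp h).2 (List.mem_toFinset.mpr hv0')⟩

lemma finish {C : Set ι} {cur : List V} (hS : Good E free T lab C cur)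
    (hall : free ⊆ cur.toFinset) :
    ∃ Lp : List V, cur <+: Lp ∧ Lp.Nodup ∧ Lp.toFinset = free ∧
      ¬ DTrio (Nbr E) Lp := by
  refine ⟨cur, List.prefix_rfl, hS.nodup, ?_, hS.trio⟩
  apply Finset.Subset.antisymm _ hall
  intro v hv
  exact hS.mem_free v (List.mem_toFinset.mp hv)

lemma main (hfree : ∀ v ∈ free, ∃ e ∈ E, v ∈ e) (hT : T.IsTree)
    (hedges : ∀ e ∈ E, ∃ i, lab i = e) (hsub : ∀ i, ∃ e ∈ E, lab i ⊆ e)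
    (hvert : ∀ v : V, ConnSet T {i | v ∈ lab i}) :
    ∀ (n : ℕ) (C : Set ι) (cur : List V), Good E free T lab C cur →
      (free \ cur.toFinset).card ≤ n →
      ∃ Lp : List V, cur <+: Lp ∧ Lp.Nodup ∧ Lp.toFinset = free ∧
        ¬ DTrio (Nbr E) Lp := by
  intro n
  induction n with
  | zero =>
    intro C cur hS hcard
    refine finish hS ?_
    rw [← Finset.sdiff_eq_empty_iff_subset, ← Finset.card_eq_zero]
    omega
  | succ n ih =>
    intro C cur hS hcard
    by_cases hall : free ⊆ cur.toFinset
    · exact finish hS hall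
    · have : ∃ v0 ∈ free, v0 ∉ cur := by
        obtain ⟨v0, hv0f, hv0⟩ := Finset.not_subset.mp hall
        exact ⟨v0, hv0f, fun h => hv0 (List.mem_toFinset.mpr h)⟩
      obtain ⟨v0, hv0f, hv0⟩ := this
      obtain ⟨e, he, hv0e⟩ := hfree v0 hv0f
      obtain ⟨i0, hi0⟩ := hedges e he
      have hv0i0 : v0 ∈ lab i0 := by rw [hi0]; exact hv0e
      rcases Set.eq_empty_or_nonempty C with hCe | ⟨c, hc⟩
      · -- C is empty : start a fresh component at i0
        have hstep : ∃ newvs : List V, Good E free T lab (C ∪ {i0}) (cur ++ newvs) ∧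
            ∀ v, v ∈ newvs ↔ (v ∈ lab i0 ∧ v ∈ free ∧ v ∉ cur) := by
          subst hCe
          classical
          set newvs : List V := (lab i0).toList.filter
            (fun v => decide (v ∈ free ∧ v ∉ cur)) with hnewdef
          have hmem : ∀ v, v ∈ newvs ↔ (v ∈ lab i0 ∧ v ∈ free ∧ v ∉ cur) := by
            intro v
            simp [hnewdef, List.mem_filter, Finset.mem_toList]
          have hcur_nil : ∀ v ∈ cur, False := by
            intro v hv
            obtain ⟨i, hi, -⟩ := (hS.inv v (hS.mem_free v hv)).mp hv
            exact hi
          refine ⟨newvs, ⟨?_, ?_, ?_, ?_, ?_⟩, hmem⟩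
          · intro x hx y hy
            simp only [Set.empty_union, Set.mem_singleton_iff] at hx hy
            subst hx; subst hy
            exact ⟨SimpleGraph.Walk.nil, by simp⟩
          · refine hS.nodup.append ((Finset.nodup_toList _).filter _) ?_
            intro a ha hanew
            exact ((hmem a).mp hanew).2.2 ha
          · intro v hv
            rcases List.mem_append.mp hv with hv | hv
            · exact hS.mem_free v hv
            · exact ((hmem v).mp hv).2.1
          · intro v hvf
            constructor
            · intro hv
              rcases List.mem_append.mp hv with hv | hv
              · exact absurd hv (fun h => hcur_nil v h)
              · exact ⟨i0, by simp, ((hmem v).mp hv).1⟩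
            · rintro ⟨i, hi, hvi⟩
              simp only [Set.empty_union, Set.mem_singleton_iff] at hi
              subst hi
              by_cases hvcur : v ∈ cur
              · exact List.mem_append_left _ hvcur
              · exact List.mem_append_right _ ((hmem v).mpr ⟨hvi, hvf, hvcur⟩)
          · intro hD
            obtain ⟨a, b, c, ha, hb, hc, hab, hnab, hac, hbc, hia, hib⟩ := hD
            have hlab : ∀ x : V, x ∈ cur ++ newvs → x ∈ lab i0 := by
              intro x hx
              rcases List.mem_append.mp hx with hx | hx
              · exact absurd hx (fun h => hcur_nil x h)
              · exact ((hmem x).mp hx).1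
            obtain ⟨e', he', hsube'⟩ := hsub i0
            exact hnab ⟨e', he', hsube' (hlab a ha), hsube' (hlab b hb)⟩
        obtain ⟨newvs, hS', hmem⟩ := hstep
        have hv0new : v0 ∈ cur ++ newvs :=
          List.mem_append_right _ ((hmem v0).mpr ⟨hv0i0, hv0f, hv0⟩)
        have hlt := card_lt (cur.prefix_append newvs) hv0f hv0 hv0new
        obtain ⟨Lp, hpre, h1, h2, h3⟩ := ih (C ∪ {i0}) (cur ++ newvs) hS' (by omega)
        exact ⟨Lp, (cur.prefix_append newvs).trans hpre, h1, h2, h3⟩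
      · obtain ⟨w⟩ := hT.1.preconnected c i0
        obtain ⟨C', cur', hS', hpre, hv0'⟩ :=
          inner hT hedges hsub hvert hv0f w hv0i0 C cur hS hc
        have hlt := card_lt hpre hv0f hv0 hv0'
        obtain ⟨Lp, hpre2, h1, h2, h3⟩ := ih C' cur' hS' (by omega)
        exact ⟨Lp, hpre.trans hpre2, h1, h2, h3⟩

end PocAux

/-- Let `Q` be a CQ (hypergraph `E`, free variables `free`)
and `L` a partial lexicographic order (a duplicate-free list of some free
variables).  If `Q` is free-connex, `L`-connex, and has no disruptive trio
w.r.t. `L`, then there is an ordering `L⁺` of all the free variables that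
begins with `L` such that `Q` has no disruptive trio w.r.t. `L⁺`. -/
theorem partial_order_completion {V : Type*} [DecidableEq V]
    (E : Finset (Finset V)) (free : Finset V)
    (hfree : ∀ v ∈ free, ∃ e ∈ E, v ∈ e)
    (L : List V) (hnd : L.Nodup) (hLf : ∀ v ∈ L, v ∈ free)
    (hfc : SConnex E free) (hLc : SConnex E L.toFinset)
    (htrio : ¬ DTrio (Nbr E) L) :
    ∃ Lp : List V, L <+: Lp ∧ Lp.Nodup ∧ Lp.toFinset = free ∧
      ¬ DTrio (Nbr E) Lp := by

  obtain ⟨ι, T, lab, hT, hedges, hsub, hvert, Sub, hSubconn, hSubcov⟩ := hLc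
  have hS : PocAux.Good E free T lab Sub L := by
    refine ⟨PocAux.connSet_of_preconnected T Sub hSubconn, hnd, hLf, ?_, htrio⟩
    intro v _
    rw [← List.mem_toFinset]
    exact hSubcov v
  exact PocAux.main hfree hT hedges hsub
    (fun v => PocAux.connSet_of_preconnected T _ (hvert v))
    ((free \ L.toFinset).card) Sub L hS (le_refl _)
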